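/- For every total streaming string transducer there exists a simple streaming string transducer computing the same function. -/

import Mathlib

set_option autoImplicit false

/-! ### Asymptotic growth of functions `A* → ℕ` -/

/-- `g` has `k`-polynomial growth: `g(w) = O(|w|^k)` and there is an infinite set `L`
of words on which `g(w) = Ω(|w|^k)`. -/
def PolyGrowth {A : Type} (g : List A → ℕ) (k : ℕ) : Prop :=
  (∃ C : ℕ, ∀ w, g w ≤ C * w.length ^ k + C) ∧
  (∃ L : Set (List A), L.Infinite ∧ ∃ c : ℕ, 0 < c ∧ ∀ w ∈ L, w.length ^ k ≤ c * g w)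

/-- `g` has exponential growth: `g(w) = 2^{O(|w|)}` and there is an infinite set `L`
of words on which `g(w) = 2^{Ω(|w|)}`. -/
def ExpGrowth {A : Type} (g : List A → ℕ) : Prop :=
  (∃ C : ℕ, ∀ w, g w ≤ 2 ^ (C * w.length + C)) ∧
  (∃ L : Set (List A), L.Infinite ∧ ∃ c : ℕ, 0 < c ∧ ∀ w ∈ L, 2 ^ w.length ≤ (g w) ^ c)

/-! ### Substitutions -/

/-- Extension of a substitution `s : X → (B ⊎ X)*` to a morphism on `(B ⊎ X)*`
fixing the letters of `B`; this also gives the composition of substitutions,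
`(s₁ ∘ s₂) x = applySubst s₁ (s₂ x)`. -/
def applySubst {B X : Type} (s : X → List (B ⊕ X)) (l : List (B ⊕ X)) : List (B ⊕ X) :=
  l.flatMap (fun c => match c with | Sum.inl b => [Sum.inl b] | Sum.inr x => s x)

/-- Evaluation of a word over `B ⊎ X` under a valuation `v : X → B*` of the registers. -/
def evalSubst {B X : Type} (v : X → List B) (l : List (B ⊕ X)) : List B :=
  l.flatMap (fun c => match c with | Sum.inl b => [b] | Sum.inr x => v x)

/-- Number of occurrences of register `x` in a word over `B ⊎ X`. -/
noncomputable def occCount {B X : Type} (x : X) (l : List (B ⊕ X)) : ℕ :=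
  l.countP (fun c => @decide (c = Sum.inr x) (Classical.propDecidable _))

/-- Total number of occurrences of register `x` in the whole set of words `{s y | y ∈ X}`. -/
noncomputable def totalOcc {B X : Type} [Fintype X] (s : X → List (B ⊕ X)) (x : X) : ℕ :=
  ∑ y : X, occCount x (s y)

/-! ### Streaming string transducers -/

/-- A streaming string transducer (SST) with input alphabet `A` and output alphabet `B`:
finitely many states `Q` with initial state `q0`, finitely many registers `X` with
initial contents `init`, a partial transition/update function (`trans`, returning the
successor state together with the register update substitution, with a common domain),
and a partial output function `out`. -/
structure SST (A B : Type) where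
  Q : Type
  X : Type
  [finQ : Fintype Q]
  [finX : Fintype X]
  q0 : Q
  init : X → List B
  trans : Q → A → Option (Q × (X → List (B ⊕ X)))
  out : Q → Option (List (B ⊕ X))

attribute [instance] SST.finQ SST.finX

/-- Run of an SST from state `q` with current register valuation `v`. -/
def SST.runFrom {A B : Type} (T : SST A B) :
    T.Q → (T.X → List B) → List A → Option (T.Q × (T.X → List B))
  | q, v, [] => some (q, v)
  | q, v, a :: w =>
    match T.trans q a with
    | none => none
    | some (q', s) => T.runFrom q' (fun x => evalSubst v (s x)) w

/-- The (partial) function computed by an SST. -/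
def SST.eval {A B : Type} (T : SST A B) (w : List A) : Option (List B) :=
  (T.runFrom T.q0 T.init w).bind fun p => (T.out p.1).map fun o => evalSubst p.2 o

def SST.Computes {A B : Type} (T : SST A B) (f : List A → Option (List B)) : Prop :=
  ∀ w, T.eval w = f w

/-- An SST is copyless if every update substitution uses each register at most once
in total. -/
def SST.Copyless {A B : Type} (T : SST A B) : Prop :=
  ∀ q a p, T.trans q a = some p → ∀ x : T.X, totalOcc p.2 x ≤ 1

/-- An SST is `k`-layered if its registers can be partitioned into layers
`X_0, …, X_k` such that every update of a register of layer `i` only uses registers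
of layers `≤ i`, and each register of layer `i` is used at most once in total in the
updates of the registers of layer `i`. -/
def SST.IsLayered {A B : Type} (T : SST A B) (k : ℕ) : Prop :=
  ∃ layer : T.X → Fin (k + 1),
    ∀ q a p, T.trans q a = some p →
      (∀ x y, Sum.inr y ∈ p.2 x → layer y ≤ layer x) ∧
      (∀ y : T.X,
        (∑ x ∈ Finset.univ.filter (fun x => layer x = layer y), occCount y (p.2 x)) ≤ 1)

/-- The composed substitution `λ(q, w)` applied along the run reading `w` from state `q`
(together with the state reached). -/
def SST.substFrom {A B : Type} (T : SST A B) :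
    T.Q → List A → Option (T.Q × (T.X → List (B ⊕ T.X)))
  | q, [] => some (q, fun x => [Sum.inr x])
  | q, a :: w =>
    match T.trans q a with
    | none => none
    | some (q', s) => (T.substFrom q' w).map fun p => (p.1, fun x => applySubst s (p.2 x))

/-- An SST is `(k,B)`-bounded if its registers can be partitioned into layers
`X_0, …, X_k` such that every update of a register of layer `i` only uses registers of
layers `≤ i`, and for every state `q` and word `w`, each register of layer `i` occurs
at most `B` times in total in `{λ(q,w)(x) | x ∈ X_i}`. -/
def SST.IsBounded {A B : Type} (T : SST A B) (k Bd : ℕ) : Prop :=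
  ∃ layer : T.X → Fin (k + 1),
    (∀ q a p, T.trans q a = some p → ∀ x y, Sum.inr y ∈ p.2 x → layer y ≤ layer x) ∧
    (∀ q w p, T.substFrom q w = some p →
      ∀ y : T.X,
        (∑ x ∈ Finset.univ.filter (fun x => layer x = layer y), occCount y (p.2 x)) ≤ Bd)

/-! ### Simple SSTs -/

/-- A simple SST: total, a single state (hence no state component), and update
substitutions and output using no letters of `B`. -/
structure SimpleSST (A B : Type) where
  X : Type
  [finX : Fintype X]
  [decX : DecidableEq X]
  init : X → List B
  upd : A → X → List X
  out : List X

attribute [instance] SimpleSST.finX SimpleSST.decX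

/-- Register valuation of a simple SST after reading a word, starting from valuation `v`. -/
def SimpleSST.valFrom {A B : Type} (T : SimpleSST A B) :
    (T.X → List B) → List A → T.X → List B
  | v, [] => v
  | v, a :: w => T.valFrom (fun x => (T.upd a x).flatMap v) w

/-- Register valuation `𝒯^w` of a simple SST after reading `w`. -/
def SimpleSST.val {A B : Type} (T : SimpleSST A B) (w : List A) : T.X → List B :=
  T.valFrom T.init w

/-- The (total) function computed by a simple SST. -/
def SimpleSST.eval {A B : Type} (T : SimpleSST A B) (w : List A) : List B :=
  (T.out).flatMap (T.val w)

/-! ### Two-way transducers -/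

/-- A tape symbol: a letter of `A` or one of the two endmarkers `⊢`, `⊣`. -/
inductive TapeSym (A : Type) where
  | lend
  | rend
  | letter (a : A)

/-- The content of the tape `⊢w⊣` at position `m ∈ {0, …, |w|+1}`. -/
def tapeAt {A : Type} (w : List A) (m : ℕ) : TapeSym A :=
  if m = 0 then TapeSym.lend
  else
    match w[m - 1]? with
    | some a => TapeSym.letter a
    | none => TapeSym.rend

/-- Head moves. -/
inductive Dir where
  | left
  | right

/-- A deterministic two-way transducer: finitely many states with an initial state and
a set of final states, and a partial transition/output function (common domain). -/
structure TwoWayT (A B : Type) where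
  Q : Type
  [finQ : Fintype Q]
  q0 : Q
  final : Set Q
  trans : Q → TapeSym A → Option ((Q × Dir) × List B)

attribute [instance] TwoWayT.finQ

/-- `TwoWayT.Steps T w c v c'`: on input `⊢w⊣` the transducer can go from
configuration `c` to configuration `c'` producing output `v`. -/
inductive TwoWayT.Steps {A B : Type} (T : TwoWayT A B) (w : List A) :
    T.Q × ℕ → List B → T.Q × ℕ → Prop
  | refl (c : T.Q × ℕ) : TwoWayT.Steps T w c [] c
  | stepL {q : T.Q} {m : ℕ} {q' : T.Q} {v u : List B} {cf : T.Q × ℕ} :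
      T.trans q (tapeAt w m) = some ((q', Dir.left), v) → 1 ≤ m →
      TwoWayT.Steps T w (q', m - 1) u cf → TwoWayT.Steps T w (q, m) (v ++ u) cf
  | stepR {q : T.Q} {m : ℕ} {q' : T.Q} {v u : List B} {cf : T.Q × ℕ} :
      T.trans q (tapeAt w m) = some ((q', Dir.right), v) → m ≤ w.length →
      TwoWayT.Steps T w (q', m + 1) u cf → TwoWayT.Steps T w (q, m) (v ++ u) cf

/-- The two-way transducer computes the partial function `f`: `f w = some v` iff there
is an accepting run on `⊢w⊣` (from `(q0, 0)` to `(q, |w|+1)` with `q` final)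
producing `v`. -/
def TwoWayT.Computes {A B : Type} (T : TwoWayT A B) (f : List A → Option (List B)) : Prop :=
  ∀ w v, f w = some v ↔ ∃ q ∈ T.final, TwoWayT.Steps T w (T.q0, 0) v (q, w.length + 1)

/-! ### Marble transducers -/

/-- Actions of a marble transducer: move left, move right, lift the marble, or drop a
marble of color `c`. -/
inductive MAct (C : Type) where
  | left
  | right
  | lift
  | drop (c : C)

/-- A deterministic marble transducer: finitely many states with an initial state and a
set of final states, finitely many marble colors `C`, and a partial transition/output
function (common domain) reading the current state, the tape symbol, and the color of
the marble at the current position (if any); on a position carrying a marble the head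
may only move left or lift the marble. -/
structure MarbleT (A B : Type) where
  Q : Type
  C : Type
  [finQ : Fintype Q]
  [finC : Fintype C]
  q0 : Q
  final : Set Q
  trans : Q → TapeSym A → Option C → Option ((Q × MAct C) × List B)
  marble_left_or_lift : ∀ q s c p, trans q s (some c) = some p →
    p.1.2 = MAct.left ∨ p.1.2 = MAct.lift

attribute [instance] MarbleT.finQ MarbleT.finC

/-- The color of the marble at position `m`, for a stack `π` of dropped marbles
(topmost first, positions strictly increasing from the top and all ≥ the head
position). -/
def marbleAt {C : Type} (m : ℕ) : List (C × ℕ) → Option C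
  | [] => none
  | (c, p) :: _ => if p = m then some c else none

/-- `MarbleT.Steps T w c v c'`: on input `⊢w⊣` the marble transducer can go from
configuration `c` to configuration `c'` producing output `v`. A configuration is a
triple (state, head position, stack of dropped marbles). -/
inductive MarbleT.Steps {A B : Type} (T : MarbleT A B) (w : List A) :
    T.Q × ℕ × List (T.C × ℕ) → List B → T.Q × ℕ × List (T.C × ℕ) → Prop
  | refl (c : T.Q × ℕ × List (T.C × ℕ)) : MarbleT.Steps T w c [] c
  | stepL {q : T.Q} {m : ℕ} {π : List (T.C × ℕ)} {q' : T.Q} {v u : List B}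
      {cf : T.Q × ℕ × List (T.C × ℕ)} :
      T.trans q (tapeAt w m) (marbleAt m π) = some ((q', MAct.left), v) → 1 ≤ m →
      MarbleT.Steps T w (q', m - 1, π) u cf → MarbleT.Steps T w (q, m, π) (v ++ u) cf
  | stepR {q : T.Q} {m : ℕ} {π : List (T.C × ℕ)} {q' : T.Q} {v u : List B}
      {cf : T.Q × ℕ × List (T.C × ℕ)} :
      marbleAt m π = none →
      T.trans q (tapeAt w m) none = some ((q', MAct.right), v) → m ≤ w.length →
      MarbleT.Steps T w (q', m + 1, π) u cf → MarbleT.Steps T w (q, m, π) (v ++ u) cf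
  | stepLift {q : T.Q} {m : ℕ} {π : List (T.C × ℕ)} {q' : T.Q} {cc : T.C} {v u : List B}
      {cf : T.Q × ℕ × List (T.C × ℕ)} :
      T.trans q (tapeAt w m) (some cc) = some ((q', MAct.lift), v) →
      MarbleT.Steps T w (q', m, π) u cf →
      MarbleT.Steps T w (q, m, (cc, m) :: π) (v ++ u) cf
  | stepDrop {q : T.Q} {m : ℕ} {π : List (T.C × ℕ)} {q' : T.Q} {cc : T.C} {v u : List B}
      {cf : T.Q × ℕ × List (T.C × ℕ)} :
      marbleAt m π = none →
      T.trans q (tapeAt w m) none = some ((q', MAct.drop cc), v) →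
      MarbleT.Steps T w (q', m, (cc, m) :: π) u cf →
      MarbleT.Steps T w (q, m, π) (v ++ u) cf

/-- The marble transducer computes the partial function `f`: `f w = some v` iff there is
an accepting run on `⊢w⊣` (from `(q0, 0, ε)` to `(q, |w|+1, ε)` with `q` final)
producing `v`. -/
def MarbleT.Computes {A B : Type} (T : MarbleT A B) (f : List A → Option (List B)) : Prop :=
  ∀ w v, f w = some v ↔
    ∃ q ∈ T.final, MarbleT.Steps T w (T.q0, 0, []) v (q, w.length + 1, [])

/-- A `k`-marble transducer: every configuration reachable from the initial
configuration carries at most `k` marbles. -/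
def MarbleT.IsKMarble {A B : Type} (T : MarbleT A B) (k : ℕ) : Prop :=
  ∀ (w : List A) (u : List B) (cfg : T.Q × ℕ × List (T.C × ℕ)),
    MarbleT.Steps T w (T.q0, 0, []) u cfg → cfg.2.2.length ≤ k

/-- `f` is computable by a `k`-marble transducer. -/
def ComputableKMarble {A B : Type} (f : List A → List B) (k : ℕ) : Prop :=
  ∃ T : MarbleT A B, T.IsKMarble k ∧ T.Computes (fun w => some (f w))

/-! ### Matrices over ℕ and ℕ-automata -/

/-- Product of two square matrices over `ℕ` (given as functions). -/
def matMul {Q : Type} [Fintype Q] (M N : Q → Q → ℕ) : Q → Q → ℕ :=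
  fun i j => ∑ x : Q, M i x * N x j

/-- Identity matrix over `ℕ`. -/
def matId {Q : Type} [DecidableEq Q] : Q → Q → ℕ :=
  fun i j => if i = j then 1 else 0

/-- Row vector times matrix. -/
def vecMat {Q : Type} [Fintype Q] (v : Q → ℕ) (M : Q → Q → ℕ) : Q → ℕ :=
  fun j => ∑ x : Q, v x * M x j

/-- Matrix times column vector. -/
def matVec {Q : Type} [Fintype Q] (M : Q → Q → ℕ) (v : Q → ℕ) : Q → ℕ :=
  fun i => ∑ x : Q, M i x * v x

/-- Dot product of two vectors over `ℕ`. -/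
def dotProd {Q : Type} [Fintype Q] (v w : Q → ℕ) : ℕ :=
  ∑ x : Q, v x * w x

/-- An `ℕ`-automaton: a finite set of states `Q`, an initial row vector `α`, a weight
matrix `μ a` for every letter `a` (extended to words as a monoid morphism `μW`), and a
final column vector `β`. -/
structure NAut (A : Type) where
  Q : Type
  [finQ : Fintype Q]
  [decQ : DecidableEq Q]
  α : Q → ℕ
  μ : A → Q → Q → ℕ
  β : Q → ℕ

attribute [instance] NAut.finQ NAut.decQ

/-- The monoid morphism `A* → ℕ^{Q×Q}` extending `μ`. -/
def NAut.μW {A : Type} (T : NAut A) : List A → T.Q → T.Q → ℕ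
  | [] => matId
  | a :: w => matMul (T.μ a) (T.μW w)

/-- The total function `g : A* → ℕ` computed by the `ℕ`-automaton: `g w = α·μ(w)·β`. -/
def NAut.g {A : Type} (T : NAut A) (w : List A) : ℕ :=
  dotProd (vecMat T.α (T.μW w)) T.β

/-- Trimness: every state is accessible and co-accessible with nonzero weight. -/
def NAut.Trim {A : Type} (T : NAut A) : Prop :=
  ∀ q : T.Q, (∃ u, 1 ≤ vecMat T.α (T.μW u) q) ∧ (∃ v, 1 ≤ matVec (T.μW v) T.β q)

/-- A heavy cycle on state `q`: a nonempty word `v` with `μ(v)(q,q) ≥ 2`. -/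
def NAut.HeavyCycle {A : Type} (T : NAut A) (q : T.Q) (v : List A) : Prop :=
  v ≠ [] ∧ 2 ≤ T.μW v q q

/-- A barbell from `q` to `q' ≠ q`: a nonempty word `v` with `μ(v)(q,q) ≥ 1`,
`μ(v)(q,q') ≥ 1` and `μ(v)(q',q') ≥ 1`. -/
def NAut.Barbell {A : Type} (T : NAut A) (q q' : T.Q) (v : List A) : Prop :=
  q ≠ q' ∧ v ≠ [] ∧ 1 ≤ T.μW v q q ∧ 1 ≤ T.μW v q q' ∧ 1 ≤ T.μW v q' q'

/-- Edge of the barbell graph `𝔊`. -/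
def NAut.GEdge {A : Type} (T : NAut A) (q1 q2 : T.Q) : Prop :=
  ∃ q q' v, T.Barbell q q' v ∧ (∃ w, 1 ≤ T.μW w q1 q) ∧ (∃ w', 1 ≤ T.μW w' q' q2)

/-- `PathLen G q n`: there is a directed path of length `n` (counting edges) in the
graph `G` ending in `q`. -/
inductive PathLen {Q : Type} (G : Q → Q → Prop) : Q → ℕ → Prop
  | zero (q : Q) : PathLen G q 0
  | succ {p q : Q} {n : ℕ} : PathLen G p n → G p q → PathLen G q (n + 1)

/-- The height of `q` in the graph `G` is `n`: the maximal length of a directed path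
ending in `q` is `n`. -/
def HeightIs {Q : Type} (G : Q → Q → Prop) (q : Q) (n : ℕ) : Prop :=
  PathLen G q n ∧ ∀ m, PathLen G q m → m ≤ n

/-! ### Statement-specific predicates -/

/-- Case (1) of the trichotomy: `|f|` has exponential growth and `f` is not computable
with `k` marbles for any `k`. -/
def MarbleCase1 {A B : Type} (f : List A → List B) : Prop :=
  ExpGrowth (fun w => (f w).length) ∧ ∀ k : ℕ, ¬ ComputableKMarble f k

/-- Case (2) of the trichotomy: `|f|` has `(k+1)`-polynomial growth for some `k`, `f` is
computable with `k` marbles, and `k` is the least possible number of marbles. -/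
def MarbleCase2 {A B : Type} (f : List A → List B) : Prop :=
  ∃ k : ℕ, PolyGrowth (fun w => (f w).length) (k + 1) ∧ ComputableKMarble f k ∧
    ∀ j : ℕ, ComputableKMarble f j → k ≤ j

/-- Case (3) of the trichotomy: `|f|` has `0`-polynomial growth and `f` is computable
with `0` marbles. -/
def MarbleCase3 {A B : Type} (f : List A → List B) : Prop :=
  PolyGrowth (fun w => (f w).length) 0 ∧ ComputableKMarble f 0

/-- The second alternative of Lemma `lem:graph`: `g` has `k`-polynomial growth for some
`k ≥ 0` and the states admit a partition `S_0, …, S_k` satisfying (a), (b), (c). -/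
def NAutPolyCase {A : Type} (T : NAut A) : Prop :=
  ∃ k : ℕ, PolyGrowth T.g k ∧
    ∃ S : T.Q → Fin (k + 1),
      (∀ q q' : T.Q, (∃ w, 1 ≤ T.μW w q q') → S q ≤ S q') ∧
      (∃ Bd : ℕ, ∀ q q' : T.Q, S q = S q' → ∀ w, T.μW w q q' ≤ Bd) ∧
      (∀ q : T.Q, ∃ C : ℕ, ∀ w, vecMat T.α (T.μW w) q ≤ C * w.length ^ (S q : ℕ) + C)


section SimpleConstruction

variable {A B : Type}

/-- Translate a word over `B ⊎ X` into registers of the simple SST, tagged by state `q`. -/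
def trReg {T : SST A B} (q : T.Q) (c : B ⊕ T.X) : (T.Q × T.X) ⊕ (T.Q × B) :=
  match c with
  | Sum.inl b => Sum.inr (q, b)
  | Sum.inr x => Sum.inl (q, x)

open Classical in
/-- The simple SST simulating a total SST `T`. -/
noncomputable def mkSimple [Fintype B] (T : SST A B) : SimpleSST A B where
  X := (T.Q × T.X) ⊕ (T.Q × B)
  finX := inferInstance
  decX := Classical.decEq _
  init := fun y =>
    match y with
    | Sum.inl (q, x) => if q = T.q0 then T.init x else []
    | Sum.inr (q, b) => if q = T.q0 then [b] else []
  upd := fun a y =>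
    match y with
    | Sum.inl (q', x) => (Finset.univ : Finset T.Q).toList.flatMap fun q =>
        match T.trans q a with
        | some (q1, s) => if q1 = q' then (s x).map (trReg q) else []
        | none => []
    | Sum.inr (q', b) => (Finset.univ : Finset T.Q).toList.flatMap fun q =>
        match T.trans q a with
        | some (q1, _) => if q1 = q' then [Sum.inr (q, b)] else []
        | none => []
  out := (Finset.univ : Finset T.Q).toList.flatMap fun q =>
    match T.out q with
    | some o => o.map (trReg q)
    | none => []

/-- Invariant relating a configuration `(q, v)` of `T` to a valuation of the simple SST. -/
def GoodVal (T : SST A B) (q : T.Q) (v : T.X → List B)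
    (V : ((T.Q × T.X) ⊕ (T.Q × B)) → List B) : Prop :=
  (∀ x, V (Sum.inl (q, x)) = v x) ∧
  (∀ q' x, q' ≠ q → V (Sum.inl (q', x)) = []) ∧
  (∀ b, V (Sum.inr (q, b)) = [b]) ∧
  (∀ q' b, q' ≠ q → V (Sum.inr (q', b)) = [])

lemma flatMap_eq_single {α β : Type} {l : List α} {f : α → List β} {q : α}
    (hq : q ∈ l) (hnd : l.Nodup) (h : ∀ p ∈ l, p ≠ q → f p = []) :
    l.flatMap f = f q := by
  induction l with
  | nil => cases hq
  | cons a t ih =>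
    rw [List.flatMap_cons]
    rcases List.mem_cons.mp hq with rfl | hq'
    · have ht : t.flatMap f = [] := by
        rw [List.flatMap_eq_nil_iff]
        intro x hx
        exact h x (List.mem_cons_of_mem _ hx)
          (fun hxa => (List.nodup_cons.mp hnd).1 (hxa ▸ hx))
      rw [ht, List.append_nil]
    · have ha : f a = [] := h a List.mem_cons_self
        (fun haq => (List.nodup_cons.mp hnd).1 (haq ▸ hq'))
      rw [ha, List.nil_append]
      exact ih hq' (List.nodup_cons.mp hnd).2 (fun p hp => h p (List.mem_cons_of_mem _ hp))

lemma trReg_flatMap {T : SST A B} {q : T.Q} {v : T.X → List B}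
    {V : ((T.Q × T.X) ⊕ (T.Q × B)) → List B} (hG : GoodVal T q v V)
    (l : List (B ⊕ T.X)) : (l.map (trReg q)).flatMap V = evalSubst v l := by
  rw [List.flatMap_map, evalSubst]
  apply List.flatMap_congr  -- may not exist; fallback below
  intro c _
  cases c with
  | inl b => exact hG.2.2.1 b
  | inr x => exact hG.1 x

lemma good_step [Fintype B] (T : SST A B) {q : T.Q} {v : T.X → List B}
    {V : ((T.Q × T.X) ⊕ (T.Q × B)) → List B} (hG : GoodVal T q v V)
    {a : A} {q1 : T.Q} {s : T.X → List (B ⊕ T.X)} (ht : T.trans q a = some (q1, s)) :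
    GoodVal T q1 (fun x => evalSubst v (s x))
      (fun y => ((mkSimple T).upd a y).flatMap V) := by
  have nd := Finset.nodup_toList (Finset.univ : Finset T.Q)
  have mem : q ∈ (Finset.univ : Finset T.Q).toList := Finset.mem_toList.mpr (Finset.mem_univ q)
  refine ⟨?_, ?_, ?_, ?_⟩
  · intro x
    show (((Finset.univ : Finset T.Q).toList.flatMap _).flatMap V) = _
    rw [List.flatMap_assoc, flatMap_eq_single mem nd]
    · rw [ht]
      simp only [if_pos rfl]
      exact trReg_flatMap hG (s x)
    · intro p _ hpq
      rcases hp : T.trans p a with _ | ⟨p1, sp⟩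
      · simp [hp]
      · simp only [hp]
        by_cases h1 : p1 = q1
        · rw [if_pos h1, List.flatMap_map, List.flatMap_eq_nil_iff]
          intro c _
          cases c with
          | inl b => exact hG.2.2.2 p b hpq
          | inr y => exact hG.2.1 p y hpq
        · rw [if_neg h1]; rfl
  · intro q' x hq'
    show (((Finset.univ : Finset T.Q).toList.flatMap _).flatMap V) = _
    rw [List.flatMap_assoc, List.flatMap_eq_nil_iff]
    intro p _
    rcases hp : T.trans p a with _ | ⟨p1, sp⟩
    · simp [hp]
    · simp only [hp]
      by_cases h1 : p1 = q'
      · rw [if_pos h1, List.flatMap_map, List.flatMap_eq_nil_iff]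
        intro c _
        have hpq : p ≠ q := by
          rintro rfl
          rw [ht] at hp
          cases hp
          exact hq' h1.symm
        cases c with
        | inl b => exact hG.2.2.2 p b hpq
        | inr y => exact hG.2.1 p y hpq
      · rw [if_neg h1]; rfl
  · intro b
    show (((Finset.univ : Finset T.Q).toList.flatMap _).flatMap V) = _
    rw [List.flatMap_assoc, flatMap_eq_single mem nd]
    · rw [ht]
      simp [hG.2.2.1 b]
    · intro p _ hpq
      rcases hp : T.trans p a with _ | ⟨p1, sp⟩
      · simp [hp]
      · simp only [hp]
        by_cases h1 : p1 = q1
        · rw [if_pos h1]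
          simp only [List.flatMap_cons, List.flatMap_nil, List.append_nil]
          exact hG.2.2.2 p b hpq
        · rw [if_neg h1]; rfl
  · intro q' b hq'
    show (((Finset.univ : Finset T.Q).toList.flatMap _).flatMap V) = _
    rw [List.flatMap_assoc, List.flatMap_eq_nil_iff]
    intro p _
    rcases hp : T.trans p a with _ | ⟨p1, sp⟩
    · simp [hp]
    · simp only [hp]
      by_cases h1 : p1 = q'
      · rw [if_pos h1]
        simp only [List.flatMap_cons, List.flatMap_nil, List.append_nil]
        apply hG.2.2.2 p b
        rintro rfl
        rw [ht] at hp
        cases hp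
        exact hq' h1.symm
      · rw [if_neg h1]; rfl

lemma good_run [Fintype B] (T : SST A B) (htrans : ∀ q a, (T.trans q a).isSome)
    (w : List A) :
    ∀ (q : T.Q) (v : T.X → List B) (V : ((T.Q × T.X) ⊕ (T.Q × B)) → List B),
      GoodVal T q v V →
      ∃ qf vf, T.runFrom q v w = some (qf, vf) ∧
        GoodVal T qf vf ((mkSimple T).valFrom V w) := by
  induction w with
  | nil => intro q v V hG; exact ⟨q, v, rfl, hG⟩
  | cons a w ih =>
    intro q v V hG
    rcases ht : T.trans q a with _ | ⟨q1, s⟩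
    · exact absurd (ht ▸ htrans q a) (by simp)
    · obtain ⟨qf, vf, hrun, hGf⟩ :=
        ih q1 (fun x => evalSubst v (s x)) (fun y => ((mkSimple T).upd a y).flatMap V)
          (good_step T hG ht)
      refine ⟨qf, vf, ?_, hGf⟩
      rw [SST.runFrom, ht]
      exact hrun

end SimpleConstruction

theorem stmt5 {A B : Type} [Fintype A] [Fintype B] (T : SST A B)
    (htrans : ∀ q a, (T.trans q a).isSome) (hout : ∀ q, (T.out q).isSome) :
    ∃ S : SimpleSST A B, ∀ w, T.eval w = some (S.eval w) := by
  refine ⟨mkSimple T, fun w => ?_⟩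
  have hG0 : GoodVal T T.q0 T.init (mkSimple T).init := by
    refine ⟨fun x => if_pos rfl, fun q' x h => if_neg h, fun b => if_pos rfl,
      fun q' b h => if_neg h⟩
  obtain ⟨qf, vf, hrun, hGf⟩ := good_run T htrans w T.q0 T.init (mkSimple T).init hG0
  rcases ho : T.out qf with _ | o
  · exact absurd (ho ▸ hout qf) (by simp)
  have heval : T.eval w = some (evalSubst vf o) := by
    simp [SST.eval, hrun, ho]
  rw [heval]
  congr 1
  have nd := Finset.nodup_toList (Finset.univ : Finset T.Q)
  have mem : qf ∈ (Finset.univ : Finset T.Q).toList := Finset.mem_toList.mpr (Finset.mem_univ qf)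
  show evalSubst vf o = ((Finset.univ : Finset T.Q).toList.flatMap (β := (T.Q × T.X) ⊕ (T.Q × B)) _).flatMap (fun y : (T.Q × T.X) ⊕ (T.Q × B) => (mkSimple T).val w y)
  rw [List.flatMap_assoc, flatMap_eq_single mem nd]
  · rw [ho]
    exact (trReg_flatMap hGf o).symm
  · intro p _ hpq
    rcases hp : T.out p with _ | op
    · simp [hp]
    · simp only [hp]
      rw [List.flatMap_map, List.flatMap_eq_nil_iff]
      intro c _
      cases c with
      | inl b => exact hGf.2.2.2 p b hpq
      | inr y => exact hGf.2.1 p y hpq
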